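/- Let p_δ(ξ) = δ⁻¹·arccos(cos(δm)·cos(δξ)) with sin(δm) ≠ 0 and cos(δm) ≠ 0. Then for all ξ ∈ ℝ, |p_δ''(ξ)|^{1/2}·|p_δ'''(ξ)|^{1/3} cannot both vanish simultaneously: i.e., there is no ξ ∈ ℝ with p_δ''(ξ) = 0 and p_δ'''(ξ) = 0. -/

import Mathlib

theorem deriv2_deriv3_not_both_zero (m δ : ℝ) (hδ : 0 < δ)
    (hs : Real.sin (δ * m) ≠ 0) (hc : Real.cos (δ * m) ≠ 0) :
    ¬ ∃ ξ : ℝ,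
      δ * Real.cos (δ * m) * Real.sin (δ * m) ^ 2 * Real.cos (δ * ξ) /
          (1 - Real.cos (δ * m) ^ 2 * Real.cos (δ * ξ) ^ 2) ^ ((3 : ℝ) / 2) = 0 ∧
      δ ^ 2 * Real.cos (δ * m) * Real.sin (δ * m) ^ 2 *
          (1 + 2 * Real.cos (δ * m) ^ 2 * Real.cos (δ * ξ) ^ 2) * Real.sin (δ * ξ) /
          (1 - Real.cos (δ * m) ^ 2 * Real.cos (δ * ξ) ^ 2) ^ ((5 : ℝ) / 2) = 0 := by
  rintro ⟨ξ, h2, h3⟩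
  set c := Real.cos (δ * m)
  set s := Real.sin (δ * m)
  set x := Real.cos (δ * ξ)
  set y := Real.sin (δ * ξ)
  have hc2 : c ^ 2 < 1 := by
    have h := Real.sin_sq_add_cos_sq (δ * m)
    nlinarith [pow_pos (abs_pos.mpr hs) 2, sq_abs s]
  have hx2 : x ^ 2 ≤ 1 := by
    have h := Real.sin_sq_add_cos_sq (δ * ξ)
    nlinarith [sq_nonneg y]
  have hden : 0 < 1 - c ^ 2 * x ^ 2 := by nlinarith [sq_nonneg c, sq_nonneg x]
  have hd3 : (1 - c ^ 2 * x ^ 2) ^ ((3 : ℝ) / 2) ≠ 0 :=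
    ne_of_gt (Real.rpow_pos_of_pos hden _)
  have hd5 : (1 - c ^ 2 * x ^ 2) ^ ((5 : ℝ) / 2) ≠ 0 :=
    ne_of_gt (Real.rpow_pos_of_pos hden _)
  have hx : x = 0 := by
    have := (div_eq_zero_iff.mp h2).resolve_right hd3
    have hδ' : δ ≠ 0 := ne_of_gt hδ
    have hs2 : s ^ 2 ≠ 0 := pow_ne_zero _ hs
    field_simp at this
    rcases mul_eq_zero.mp this with h | h
    · rcases mul_eq_zero.mp h with h' | h'
      · rcases mul_eq_zero.mp h' with h'' | h''
        · exact absurd h'' hδ'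
        · exact absurd h'' hc
      · exact absurd h' hs2
    · exact h
  have hy : y = 0 := by
    have := (div_eq_zero_iff.mp h3).resolve_right hd5
    have hδ' : δ ≠ 0 := ne_of_gt hδ
    have hs2 : s ^ 2 ≠ 0 := pow_ne_zero _ hs
    have hpos : (1 + 2 * c ^ 2 * x ^ 2) ≠ 0 := by positivity
    field_simp at this
    rcases mul_eq_zero.mp this with h | h
    · rcases mul_eq_zero.mp h with h' | h'
      · rcases mul_eq_zero.mp h' with h'' | h''
        · rcases mul_eq_zero.mp h'' with h3 | h3
          · exact absurd h3 (pow_ne_zero _ hδ')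
          · exact absurd h3 hc
        · exact absurd h'' hs2
      · exact absurd (by linarith : 1 + 2 * c ^ 2 * x ^ 2 = 0) hpos
    · exact h
  have h1 : x ^ 2 + y ^ 2 = 1 := Real.cos_sq_add_sin_sq (δ * ξ)
  rw [hx, hy] at h1
  norm_num at h1
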